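/- Let (Ω, 𝓕, μ) be a standard Borel probability space, T : Ω → ℝ measurable, E a standard Borel space, X : Ω → E measurable, Y : Ω → ℝ measurable, L > 0 fixed, t ∈ [0, L), and H : E → (ℝ → ℝ≥0) with (x,s) ↦ H(x)(s) jointly measurable. Assume (i) for (μ.map X)-almost every x, the regular conditional distribution of T given X = x is absolutely continuous with respect to Lebesgue measure with density u ↦ 1_{[0,∞)}(u) · H(x)(u) · exp(−∫₀ᵘ H(x)(s) ds); and (ii) strong ignorability: for every Borel set A ⊆ ℝ, the conditional expectation of the indicator of {min(T,t) ∈ A} given σ(Y) ⊔ σ(X) equals almost surely its conditional expectation given σ(X). Define the propensity process Θ_t : Ω → (ℝ → ℝ≥0) by Θ_t(ω)(s) = H(X(ω))(s) for s ∈ [0, t) and 0 otherwise. Then for every Borel set A ⊆ ℝ, the conditional expectation of the indicator of {min(T,t) ∈ A} given σ(Y) ⊔ σ(Θ_t) equals almost surely its conditional expectation given σ(Θ_t). -/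

import Mathlib

open MeasureTheory ProbabilityTheory

open scoped ENNReal NNReal

lemma aux_measurable_intervalIntegral {α : Type*} [MeasurableSpace α]
    {F : α → ℝ → ℝ} (hF : Measurable (Function.uncurry F)) :
    Measurable fun p : α × ℝ => ∫ s in (0:ℝ)..p.2, F p.1 s := by
  have hmeas : ∀ (c d : α × ℝ → ℝ), Measurable c → Measurable d →
      Measurable fun p : α × ℝ => ∫ s in Set.Ioc (c p) (d p), F p.1 s := by
    intro c d hc hd
    have h1 : ∀ p : α × ℝ, (∫ s in Set.Ioc (c p) (d p), F p.1 s)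
        = ∫ s, (Set.Ioc (c p) (d p)).indicator (F p.1) s := by
      intro p
      rw [integral_indicator measurableSet_Ioc]
    simp_rw [h1]
    have h2 : StronglyMeasurable fun q : (α × ℝ) × ℝ =>
        (Set.Ioc (c q.1) (d q.1)).indicator (F q.1.1) q.2 := by
      apply Measurable.stronglyMeasurable
      have h3 : (fun q : (α × ℝ) × ℝ => (Set.Ioc (c q.1) (d q.1)).indicator (F q.1.1) q.2)
          = fun q : (α × ℝ) × ℝ =>
              if q ∈ {q : (α × ℝ) × ℝ | c q.1 < q.2 ∧ q.2 ≤ d q.1} then F q.1.1 q.2 else 0 := by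
        funext q
        simp [Set.indicator_apply, Set.mem_Ioc]
      rw [h3]
      have hm4 : Measurable fun q : (α × ℝ) × ℝ => (q.1.1, q.2) :=
        (measurable_fst.comp measurable_fst).prodMk measurable_snd
      refine Measurable.ite ?_ (hF.comp hm4) measurable_const
      exact ((measurableSet_lt (hc.comp measurable_fst) measurable_snd).inter
        (measurableSet_le measurable_snd (hd.comp measurable_fst)))
    exact h2.integral_prod_right'.measurable
  have h0 : (fun p : α × ℝ => ∫ s in (0:ℝ)..p.2, F p.1 s)
      = fun p : α × ℝ => (∫ s in Set.Ioc (0:ℝ) p.2, F p.1 s)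
          - ∫ s in Set.Ioc p.2 (0:ℝ), F p.1 s := by
    funext p
    simp [intervalIntegral]
  rw [h0]
  exact (hmeas _ _ measurable_const measurable_snd).sub
    (hmeas _ _ measurable_snd measurable_const)

lemma aux_condExpKernel_set {Ω : Type*} {m : MeasurableSpace Ω} [mΩ : MeasurableSpace Ω] [StandardBorelSpace Ω]
    (μ : Measure Ω) [IsFiniteMeasure μ] (hm : m ≤ mΩ)
    {s : Set Ω} (hs : MeasurableSet[m] s) :
    (fun ω => condExpKernel μ m ω s) =ᵐ[μ] fun ω => Set.indicator s (fun _ => (1:ℝ≥0∞)) ω := by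
  have hs0 : MeasurableSet s := hm s hs
  have h1 := condExpKernel_ae_eq_condExp (μ := μ) hm hs0
  simp only [measureReal_def] at h1
  have h2 : μ⟦s | m⟧ = Set.indicator s fun _ => (1:ℝ) := by
    refine condExp_of_stronglyMeasurable hm ?_ ?_
    · exact (stronglyMeasurable_const (β := ℝ)).indicator hs
    · exact (integrable_const (1:ℝ)).indicator hs0
  rw [h2] at h1
  filter_upwards [h1] with ω hω
  have hne : condExpKernel μ m ω s ≠ ∞ := measure_ne_top _ _
  have := congrArg ENNReal.ofReal hω
  rw [ENNReal.ofReal_toReal hne] at this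
  rw [this]
  by_cases hωs : ω ∈ s <;> simp [hωs]

lemma aux_lintegral_condExpKernel {Ω : Type*} {m : MeasurableSpace Ω} [mΩ : MeasurableSpace Ω] [StandardBorelSpace Ω]
    (μ : Measure Ω) [IsFiniteMeasure μ] (hm : m ≤ mΩ)
    {f : Ω → ℝ≥0∞} (hf : Measurable[m] f) :
    (fun ω => ∫⁻ ω', f ω' ∂(condExpKernel μ m ω)) =ᵐ[μ] f := by
  refine @Measurable.ennreal_induction Ω m
    (fun g => (fun ω => ∫⁻ ω', g ω' ∂(condExpKernel μ m ω)) =ᵐ[μ] g) ?_ ?_ ?_ f hf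
  · intro c s hs
    have h0 : ∀ ω, (∫⁻ ω', Set.indicator s (fun _ => c) ω' ∂(condExpKernel μ m ω))
        = c * condExpKernel μ m ω s := by
      intro ω
      rw [lintegral_indicator (hm s hs)]
      simp [lintegral_const, Measure.restrict_apply MeasurableSet.univ]
    simp_rw [h0]
    filter_upwards [aux_condExpKernel_set μ hm hs] with ω hω
    rw [hω]
    by_cases hωs : ω ∈ s <;> simp [hωs]
  · intro g₁ g₂ _ hg₁ hg₂ h₁ h₂
    filter_upwards [h₁, h₂] with ω hω₁ hω₂
    simp only [Pi.add_apply]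
    rw [lintegral_add_left (hg₁.mono hm le_rfl), hω₁, hω₂]
  · intro g hgm hgmono hg
    filter_upwards [ae_all_iff.2 hg] with ω hω
    rw [lintegral_iSup (fun n => (hgm n).mono hm le_rfl) hgmono]
    exact iSup_congr hω

lemma aux_kernel_lintegral_meas {Ω' Ω : Type*} [MeasurableSpace Ω'] [MeasurableSpace Ω]
    (κ : Kernel Ω' Ω) [IsSFiniteKernel κ] {G : Ω → ℝ → ℝ≥0∞}
    (hG : Measurable fun p : Ω × ℝ => G p.1 p.2) :
    Measurable fun p : Ω' × ℝ => ∫⁻ ω', G ω' p.2 ∂(κ p.1) := by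
  have h := Measurable.lintegral_kernel_prod_right' (κ := κ.comap Prod.fst measurable_fst)
    (f := fun q : (Ω' × ℝ) × Ω => G q.2 q.1.2)
    (hG.comp (measurable_snd.prodMk (measurable_snd.comp measurable_fst)))
  simpa only [Kernel.comap_apply] using h

lemma aux_Phi_meas {Ω : Type*} [MeasurableSpace Ω] {Gt : Ω → ℝ → ℝ≥0∞}
    (hGt : Measurable fun p : Ω × ℝ => Gt p.1 p.2) (B : Set ℝ) (t : ℝ) :
    Measurable fun ω => ∫⁻ u in B ∩ Set.Ico (0:ℝ) t,
      Gt ω u * ENNReal.ofReal (Real.exp (-∫ s in (0:ℝ)..u, (Gt ω s).toReal)) := by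
  apply Measurable.lintegral_prod_right' (ν := volume.restrict (B ∩ Set.Ico (0:ℝ) t))
    (f := fun p : Ω × ℝ =>
      Gt p.1 p.2 * ENNReal.ofReal (Real.exp (-∫ s in (0:ℝ)..p.2, (Gt p.1 s).toReal)))
  apply hGt.mul
  apply Measurable.ennreal_ofReal
  apply Measurable.exp
  apply Measurable.neg
  exact aux_measurable_intervalIntegral (F := fun ω s => (Gt ω s).toReal) hGt.ennreal_toReal

lemma aux_assemble {Ω : Type*} (m1 m2 m3 : MeasurableSpace Ω) [mΩ : MeasurableSpace Ω]
    (μ : Measure Ω) [IsFiniteMeasure μ] (f W : Ω → ℝ)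
    (hm1 : m1 ≤ mΩ) (hm2 : m2 ≤ mΩ) (hm3 : m3 ≤ mΩ) (h32 : m3 ≤ m2)
    (hWsm : StronglyMeasurable[m3] W) (hWf : W =ᵐ[μ] μ[f|m2])
    (hign : μ[f|m1 ⊔ m2] =ᵐ[μ] μ[f|m2]) :
    μ[f|m1 ⊔ m3] =ᵐ[μ] μ[f|m3] := by
  have hWint : Integrable W μ := integrable_condExp.congr hWf.symm
  have E1 : μ[f|m3] =ᵐ[μ] W := by
    calc μ[f|m3] =ᵐ[μ] μ[μ[f|m2]|m3] := (condExp_condExp_of_le h32 hm2).symm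
    _ =ᵐ[μ] μ[W|m3] := condExp_congr_ae hWf.symm
    _ = W := condExp_of_stronglyMeasurable hm3 hWsm hWint
  have le1 : m1 ⊔ m3 ≤ m1 ⊔ m2 := sup_le_sup_left h32 _
  have le2 : m1 ⊔ m2 ≤ mΩ := sup_le hm1 hm2
  have le3 : m1 ⊔ m3 ≤ mΩ := sup_le hm1 hm3
  have E2 : μ[f|m1 ⊔ m3] =ᵐ[μ] W := by
    calc μ[f|m1 ⊔ m3] =ᵐ[μ] μ[μ[f|m1 ⊔ m2]|m1 ⊔ m3] := (condExp_condExp_of_le le1 le2).symm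
    _ =ᵐ[μ] μ[μ[f|m2]|m1 ⊔ m3] := condExp_congr_ae hign
    _ =ᵐ[μ] μ[W|m1 ⊔ m3] := condExp_congr_ae hWf.symm
    _ = W := condExp_of_stronglyMeasurable le3 (hWsm.mono le_sup_right) hWint
  exact E2.trans E1.symm

lemma aux_Phi_congr (t : ℝ) {B : Set ℝ} (hB : MeasurableSet B) (G1 : ℝ → ℝ≥0∞) (h : ℝ → NNReal)
    (hu : ∀ᵐ u ∂(volume.restrict (Set.Ico (0:ℝ) t)), G1 u = ((h u : ℝ≥0∞))) :
    ∫⁻ u in B ∩ Set.Ico (0:ℝ) t,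
        G1 u * ENNReal.ofReal (Real.exp (-∫ s in (0:ℝ)..u, (G1 s).toReal))
      = ∫⁻ u in B ∩ Set.Ico (0:ℝ) t,
        (h u : ℝ≥0∞) * ENNReal.ofReal (Real.exp (-∫ s in (0:ℝ)..u, (h s : ℝ))) := by
  have hu' : ∀ᵐ u ∂(volume : Measure ℝ), u ∈ Set.Ico (0:ℝ) t → G1 u = ((h u : ℝ≥0∞)) :=
    (ae_restrict_iff' measurableSet_Ico).1 hu
  refine lintegral_congr_ae ?_
  have h1 : ∀ᵐ u ∂(volume.restrict (B ∩ Set.Ico (0:ℝ) t)), u ∈ B ∩ Set.Ico (0:ℝ) t :=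
    ae_restrict_mem (hB.inter measurableSet_Ico)
  filter_upwards [h1, ae_restrict_of_ae hu'] with u humem huG
  obtain ⟨huB, hu0, hut⟩ := humem
  have hint : (∫ s in (0:ℝ)..u, (G1 s).toReal) = ∫ s in (0:ℝ)..u, (h s : ℝ) := by
    refine intervalIntegral.integral_congr_ae ?_
    filter_upwards [hu'] with s hs hsmem
    rw [Set.uIoc_of_le hu0] at hsmem
    have hs' : s ∈ Set.Ico (0:ℝ) t := ⟨le_of_lt hsmem.1, lt_of_le_of_lt hsmem.2 hut⟩
    rw [hs hs', ENNReal.coe_toReal]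
  rw [huG ⟨hu0, hut⟩, hint]

lemma aux_density_calc (t : ℝ) (ht0 : 0 ≤ t) (A : Set ℝ) (hA : MeasurableSet A) (h : ℝ → NNReal)
    (htot : volume.withDensity (fun u : ℝ => Set.indicator (Set.Ici (0:ℝ))
        (fun v => ENNReal.ofReal ((h v : ℝ) * Real.exp (-∫ s in (0:ℝ)..v, (h s : ℝ)))) u)
        Set.univ = 1) :
    volume.withDensity (fun u : ℝ => Set.indicator (Set.Ici (0:ℝ))
        (fun v => ENNReal.ofReal ((h v : ℝ) * Real.exp (-∫ s in (0:ℝ)..v, (h s : ℝ)))) u)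
      ((fun y => min y t) ⁻¹' A)
      = (∫⁻ u in A ∩ Set.Ico (0:ℝ) t,
            (h u : ℝ≥0∞) * ENNReal.ofReal (Real.exp (-∫ s in (0:ℝ)..u, (h s : ℝ))))
        + (Set.indicator A (fun _ => (1:ℝ≥0∞)) t) *
          (1 - ∫⁻ u in Set.univ ∩ Set.Ico (0:ℝ) t,
            (h u : ℝ≥0∞) * ENNReal.ofReal (Real.exp (-∫ s in (0:ℝ)..u, (h s : ℝ)))) := by
  set g : ℝ → ℝ≥0∞ :=
    fun v => ENNReal.ofReal ((h v : ℝ) * Real.exp (-∫ s in (0:ℝ)..v, (h s : ℝ))) with hg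
  have hgsplit : ∀ v : ℝ, g v
      = (h v : ℝ≥0∞) * ENNReal.ofReal (Real.exp (-∫ s in (0:ℝ)..v, (h s : ℝ))) := by
    intro v
    show ENNReal.ofReal ((h v : ℝ) * Real.exp (-∫ s in (0:ℝ)..v, (h s : ℝ))) = _
    rw [ENNReal.ofReal_mul (h v).coe_nonneg, ENNReal.ofReal_coe_nnreal]
  have hs₀ : MeasurableSet ((fun y => min y t) ⁻¹' A) :=
    (measurable_id.min measurable_const) hA
  have hres : ∀ S : Set ℝ, MeasurableSet S →
      volume.withDensity (fun u : ℝ => Set.indicator (Set.Ici (0:ℝ)) g u) S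
        = ∫⁻ u in Set.Ici (0:ℝ) ∩ S, g u := by
    intro S hS
    rw [withDensity_apply _ hS]
    rw [lintegral_indicator measurableSet_Ici, Measure.restrict_restrict measurableSet_Ici]
  have hIci : Set.Ico (0:ℝ) t ∪ Set.Ici t = Set.Ici (0:ℝ) := Set.Ico_union_Ici_eq_Ici ht0
  have hdisj : Disjoint (Set.Ico (0:ℝ) t) (Set.Ici t) := by
    rw [Set.disjoint_left]
    intro u hu hu'
    exact absurd hu.2 (not_lt.2 hu')
  have htot' : (∫⁻ u in Set.Ico (0:ℝ) t, g u) + ∫⁻ u in Set.Ici t, g u = 1 := by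
    rw [← lintegral_union measurableSet_Ici hdisj, hIci]
    rw [hres Set.univ MeasurableSet.univ, Set.inter_univ] at htot
    exact htot
  have hfin : (∫⁻ u in Set.Ico (0:ℝ) t, g u) ≠ ⊤ := by
    intro hcon
    rw [hcon] at htot'
    simp at htot'
  have hIci_t : (∫⁻ u in Set.Ici t, g u) = 1 - ∫⁻ u in Set.Ico (0:ℝ) t, g u := by
    refine ENNReal.eq_sub_of_add_eq hfin ?_
    rw [add_comm]
    exact htot'
  by_cases htA : t ∈ A
  · have hset : Set.Ici (0:ℝ) ∩ ((fun y => min y t) ⁻¹' A)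
        = (A ∩ Set.Ico (0:ℝ) t) ∪ Set.Ici t := by
      ext u
      simp only [Set.mem_inter_iff, Set.mem_preimage, Set.mem_Ici, Set.mem_union, Set.mem_Ico]
      constructor
      · rintro ⟨hu0, humin⟩
        rcases lt_or_ge u t with hut | htu
        · left
          rw [min_eq_left hut.le] at humin
          exact ⟨humin, hu0, hut⟩
        · right; exact htu
      · rintro (⟨huA, hu0, hut⟩ | htu)
        · exact ⟨hu0, by rwa [min_eq_left hut.le]⟩
        · exact ⟨le_trans ht0 htu, by rwa [min_eq_right htu]⟩
    have hdisj2 : Disjoint (A ∩ Set.Ico (0:ℝ) t) (Set.Ici t) :=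
      Disjoint.mono_left Set.inter_subset_right hdisj
    rw [hres _ hs₀, hset, lintegral_union measurableSet_Ici hdisj2, hIci_t]
    rw [Set.indicator_of_mem htA, Set.univ_inter]
    simp only [one_mul]
    congr 1
    · exact lintegral_congr fun u => hgsplit u
    · congr 1
      exact lintegral_congr fun u => hgsplit u
  · have hset : Set.Ici (0:ℝ) ∩ ((fun y => min y t) ⁻¹' A) = A ∩ Set.Ico (0:ℝ) t := by
      ext u
      simp only [Set.mem_inter_iff, Set.mem_preimage, Set.mem_Ici, Set.mem_Ico]
      constructor
      · rintro ⟨hu0, humin⟩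
        rcases lt_or_ge u t with hut | htu
        · rw [min_eq_left hut.le] at humin
          exact ⟨humin, hu0, hut⟩
        · rw [min_eq_right htu] at humin
          exact absurd humin htA
      · rintro ⟨huA, hu0, hut⟩
        exact ⟨hu0, by rwa [min_eq_left hut.le]⟩
    rw [hres _ hs₀, hset, Set.indicator_of_notMem htA, zero_mul, add_zero]
    exact lintegral_congr fun u => hgsplit u

/-- Theorem 1 (model-specific form): under the hazard model for treatment assignment and strong
ignorability given the covariate history `X`, treatment assignment restricted to time `t` is
strongly ignorable given the propensity process `Θ_t`: for every Borel set `A`, the conditional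
expectation of the indicator of `{min (T, t) ∈ A}` given `σ(Y) ⊔ σ(Θ_t)` equals a.s. its
conditional expectation given `σ(Θ_t)`. -/
theorem condexp_indicator_given_propensityProcess
    {Ω E : Type*}
    [MeasurableSpace Ω] [StandardBorelSpace Ω] [Nonempty Ω]
    [MeasurableSpace E] [StandardBorelSpace E]
    (μ : Measure Ω) [IsProbabilityMeasure μ]
    (T : Ω → ℝ) (X : Ω → E) (Y : Ω → ℝ)
    (hT : Measurable T) (hX : Measurable X) (hY : Measurable Y)
    (L : ℝ) (hL : 0 < L) (t : ℝ) (ht : t ∈ Set.Ico (0 : ℝ) L)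
    (H : E → ℝ → NNReal) (hH : Measurable fun p : E × ℝ => H p.1 p.2)
    (hdens : ∀ᵐ x ∂(μ.map X), condDistrib T X μ x =
      volume.withDensity fun u : ℝ =>
        Set.indicator (Set.Ici (0 : ℝ))
          (fun v => ENNReal.ofReal
            ((H x v : ℝ) * Real.exp (-∫ s in (0 : ℝ)..v, (H x s : ℝ)))) u)
    (h_ignorable : ∀ A : Set ℝ, MeasurableSet A →
      μ[Set.indicator ((fun ω => min (T ω) t) ⁻¹' A) (fun _ => (1 : ℝ)) |
          MeasurableSpace.comap Y inferInstance ⊔ MeasurableSpace.comap X inferInstance]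
        =ᵐ[μ]
      μ[Set.indicator ((fun ω => min (T ω) t) ⁻¹' A) (fun _ => (1 : ℝ)) |
          MeasurableSpace.comap X inferInstance]) :
    ∀ A : Set ℝ, MeasurableSet A →
      μ[Set.indicator ((fun ω => min (T ω) t) ⁻¹' A) (fun _ => (1 : ℝ)) |
          MeasurableSpace.comap Y inferInstance ⊔
            MeasurableSpace.comap
              (fun ω => fun s : ℝ => if s ∈ Set.Ico (0 : ℝ) t then H (X ω) s else 0)
              inferInstance]
        =ᵐ[μ]
      μ[Set.indicator ((fun ω => min (T ω) t) ⁻¹' A) (fun _ => (1 : ℝ)) |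
          MeasurableSpace.comap
            (fun ω => fun s : ℝ => if s ∈ Set.Ico (0 : ℝ) t then H (X ω) s else 0)
            inferInstance] := by
  intro A hA
  set Θ : Ω → ℝ → ℝ≥0 :=
    fun ω => fun s : ℝ => if s ∈ Set.Ico (0 : ℝ) t then H (X ω) s else 0 with hΘdef
  -- basic measurability
  have hΘm : Measurable Θ := by
    refine measurable_pi_lambda _ fun s => ?_
    by_cases hs : s ∈ Set.Ico (0:ℝ) t
    · simp only [hΘdef, hs, if_true]
      exact hH.comp (hX.prodMk measurable_const)
    · simp only [hΘdef, hs, if_false]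
      exact measurable_const
  have hmY : MeasurableSpace.comap Y inferInstance ≤ (inferInstance : MeasurableSpace Ω) :=
    hY.comap_le
  have hmX : MeasurableSpace.comap X inferInstance ≤ (inferInstance : MeasurableSpace Ω) :=
    hX.comap_le
  have hmT : MeasurableSpace.comap Θ inferInstance ≤ (inferInstance : MeasurableSpace Ω) :=
    hΘm.comap_le
  have hTX : MeasurableSpace.comap Θ inferInstance ≤ MeasurableSpace.comap X inferInstance := by
    have hg : Measurable (fun x : E => fun s : ℝ => if s ∈ Set.Ico (0:ℝ) t then H x s else 0) := by
      refine measurable_pi_lambda _ fun s => ?_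
      by_cases hs : s ∈ Set.Ico (0:ℝ) t
      · simp only [hs, if_true]
        exact hH.comp (measurable_id.prodMk measurable_const)
      · simp only [hs, if_false]
        exact measurable_const
    have hcomp : Θ = (fun x : E => fun s : ℝ => if s ∈ Set.Ico (0:ℝ) t then H x s else 0) ∘ X :=
      rfl
    rw [hcomp, ← MeasurableSpace.comap_comp]
    exact MeasurableSpace.comap_mono hg.comap_le
  -- the set s₀ and integrand f
  have hmin : Measurable fun y : ℝ => min y t := measurable_id.min measurable_const
  have hs₀ : MeasurableSet ((fun y : ℝ => min y t) ⁻¹' A) := hmin hA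
  -- the functions G and G-tilde
  set G : Ω → ℝ → ℝ≥0∞ :=
    fun ω u => if u ∈ Set.Ico (0:ℝ) t then ((H (X ω) u : ℝ≥0) : ℝ≥0∞) else 0 with hGdef
  have hGcoe : ∀ ω u, G ω u = ((Θ ω u : ℝ≥0) : ℝ≥0∞) := by
    intro ω u
    simp only [hGdef, hΘdef, apply_ite ((↑) : ℝ≥0 → ℝ≥0∞), ENNReal.coe_zero]
  have hGjm : Measurable fun p : Ω × ℝ => G p.1 p.2 := by
    refine Measurable.ite ?_ ?_ measurable_const
    · exact measurable_snd measurableSet_Ico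
    · exact measurable_coe_nnreal_ennreal.comp
        (hH.comp ((hX.comp measurable_fst).prodMk measurable_snd))
  have hΘmT : Measurable[MeasurableSpace.comap Θ inferInstance] Θ :=
    measurable_iff_comap_le.2 le_rfl
  have hGm : ∀ u : ℝ, Measurable[MeasurableSpace.comap Θ inferInstance] fun ω => G ω u := by
    intro u
    have : (fun ω => G ω u) = fun ω => ((Θ ω u : ℝ≥0) : ℝ≥0∞) := funext fun ω => hGcoe ω u
    rw [this]
    exact measurable_coe_nnreal_ennreal.comp ((measurable_pi_apply u).comp hΘmT)
  set Gt : Ω → ℝ → ℝ≥0∞ :=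
    fun ω u => ∫⁻ ω', G ω' u ∂(condExpKernel μ (MeasurableSpace.comap Θ inferInstance) ω)
    with hGtdef
  have hGtjm : Measurable[(MeasurableSpace.comap Θ inferInstance).prod
      (inferInstance : MeasurableSpace ℝ)] fun p : Ω × ℝ => Gt p.1 p.2 :=
    @aux_kernel_lintegral_meas Ω Ω (MeasurableSpace.comap Θ inferInstance) _
      (condExpKernel μ (MeasurableSpace.comap Θ inferInstance)) inferInstance G hGjm
  have hGtG : ∀ u : ℝ, (fun ω => Gt ω u) =ᵐ[μ] fun ω => G ω u := fun u =>
    aux_lintegral_condExpKernel μ hmT (hGm u)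
  -- joint measurability w.r.t. the ambient σ-algebra
  have hprodle : (MeasurableSpace.comap Θ inferInstance).prod
      (inferInstance : MeasurableSpace ℝ) ≤ (inferInstance : MeasurableSpace (Ω × ℝ)) := by
    refine sup_le_sup ?_ le_rfl
    exact MeasurableSpace.comap_mono hmT
  have hGtjm' : Measurable fun p : Ω × ℝ => Gt p.1 p.2 := hGtjm.mono hprodle le_rfl
  -- Fubini: a.e. ω, Gt ω = G ω a.e. on [0, t)
  have haeae : ∀ᵐ ω ∂μ, ∀ᵐ u ∂(volume.restrict (Set.Ico (0:ℝ) t)), Gt ω u = G ω u := by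
    set ν : Measure ℝ := volume.restrict (Set.Ico (0:ℝ) t) with hν
    have hN : MeasurableSet {p : Ω × ℝ | Gt p.1 p.2 = G p.1 p.2} := by
      have heq : {p : Ω × ℝ | Gt p.1 p.2 = G p.1 p.2}
          = {p : Ω × ℝ | Gt p.1 p.2 ≤ G p.1 p.2} ∩ {p : Ω × ℝ | G p.1 p.2 ≤ Gt p.1 p.2} := by
        ext p
        simp [le_antisymm_iff]
      rw [heq]
      exact (measurableSet_le hGtjm' hGjm).inter (measurableSet_le hGjm hGtjm')
    have hNc : MeasurableSet {p : Ω × ℝ | Gt p.1 p.2 = G p.1 p.2}ᶜ := hN.compl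
    have hswapN : MeasurableSet (Prod.swap ⁻¹' {p : Ω × ℝ | Gt p.1 p.2 = G p.1 p.2}ᶜ) :=
      measurable_swap hNc
    have hsec : ∀ u : ℝ, μ (Prod.mk u ⁻¹'
        (Prod.swap ⁻¹' {p : Ω × ℝ | Gt p.1 p.2 = G p.1 p.2}ᶜ)) = 0 := by
      intro u
      have h1 : (Prod.mk u ⁻¹' (Prod.swap ⁻¹' {p : Ω × ℝ | Gt p.1 p.2 = G p.1 p.2}ᶜ))
          = {ω : Ω | ¬ Gt ω u = G ω u} := rfl
      rw [h1]
      exact ae_iff.1 (hGtG u)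
    have hswap0 : (ν.prod μ) (Prod.swap ⁻¹' {p : Ω × ℝ | Gt p.1 p.2 = G p.1 p.2}ᶜ) = 0 := by
      rw [Measure.prod_apply hswapN]
      rw [lintegral_congr hsec]
      simp
    have hprod0 : (μ.prod ν) {p : Ω × ℝ | Gt p.1 p.2 = G p.1 p.2}ᶜ = 0 := by
      rw [← Measure.prod_swap, Measure.map_apply measurable_swap hNc]
      exact hswap0
    have hae2 : ∀ᵐ p ∂(μ.prod ν), Gt p.1 p.2 = G p.1 p.2 := by
      rw [ae_iff]
      exact hprod0
    exact Measure.ae_ae_of_ae_prod hae2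
  -- transfer the density hypothesis
  have hd' : ∀ᵐ ω ∂μ, condDistrib T X μ (X ω) =
      volume.withDensity fun u : ℝ =>
        Set.indicator (Set.Ici (0 : ℝ))
          (fun v => ENNReal.ofReal
            ((H (X ω) v : ℝ) * Real.exp (-∫ s in (0 : ℝ)..v, (H (X ω) s : ℝ)))) u :=
    ae_of_ae_map hX.aemeasurable hdens
  -- the candidate W
  set W : Ω → ℝ := fun ω =>
    ((∫⁻ u in A ∩ Set.Ico (0:ℝ) t,
        Gt ω u * ENNReal.ofReal (Real.exp (-∫ s in (0:ℝ)..u, (Gt ω s).toReal)))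
      + (Set.indicator A (fun _ => (1:ℝ≥0∞)) t) *
        (1 - ∫⁻ u in Set.univ ∩ Set.Ico (0:ℝ) t,
          Gt ω u * ENNReal.ofReal (Real.exp (-∫ s in (0:ℝ)..u, (Gt ω s).toReal)))).toReal
    with hWdef
  have hWm : Measurable[MeasurableSpace.comap Θ inferInstance] W := by
    have h1 := @aux_Phi_meas Ω (MeasurableSpace.comap Θ inferInstance) Gt hGtjm A t
    have h2 := @aux_Phi_meas Ω (MeasurableSpace.comap Θ inferInstance) Gt hGtjm Set.univ t
    exact (h1.add ((measurable_const.mul (Measurable.const_sub h2 1)))).ennreal_toReal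
  -- W agrees a.e. with the conditional probability
  have hW_eq : ∀ᵐ ω ∂μ, W ω = (condDistrib T X μ (X ω) ((fun y : ℝ => min y t) ⁻¹' A)).toReal := by
    filter_upwards [haeae, hd'] with ω hae hdω
    have htot : volume.withDensity (fun u : ℝ => Set.indicator (Set.Ici (0:ℝ))
        (fun v => ENNReal.ofReal
          ((H (X ω) v : ℝ) * Real.exp (-∫ s in (0:ℝ)..v, (H (X ω) s : ℝ)))) u)
        Set.univ = 1 := by
      rw [← hdω]
      exact measure_univ
    have hcalc := aux_density_calc t ht.1 A hA (H (X ω)) htot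
    have hu : ∀ᵐ u ∂(volume.restrict (Set.Ico (0:ℝ) t)), Gt ω u = ((H (X ω) u : ℝ≥0) : ℝ≥0∞) := by
      filter_upwards [hae, ae_restrict_mem measurableSet_Ico] with u huG humem
      rw [huG, hGdef]
      simp [humem]
    have hPhiA := aux_Phi_congr t hA (fun u => Gt ω u) (H (X ω)) hu
    have hPhiU := aux_Phi_congr t MeasurableSet.univ (fun u => Gt ω u) (H (X ω)) hu
    rw [hWdef]
    simp only []
    rw [hPhiA, hPhiU, hdω, hcalc]
  -- identification with the conditional expectation given X
  have hWf : W =ᵐ[μ] μ[Set.indicator ((fun ω => min (T ω) t) ⁻¹' A) (fun _ => (1 : ℝ)) |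
      MeasurableSpace.comap X inferInstance] := by
    have h1 := condDistrib_ae_eq_condExp (μ := μ) hX hT hs₀
    refine (Filter.EventuallyEq.trans ?_ h1)
    filter_upwards [hW_eq] with ω hω
    exact hω
  exact aux_assemble (MeasurableSpace.comap Y inferInstance)
    (MeasurableSpace.comap X inferInstance) (MeasurableSpace.comap Θ inferInstance) μ
    (Set.indicator ((fun ω => min (T ω) t) ⁻¹' A) (fun _ => (1 : ℝ))) W
    hmY hmX hmT hTX hWm.stronglyMeasurable hWf (h_ignorable A hA)
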